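/- Let G be a graph in standard Cohen–Macaulay very well-covered form on {x_1,…,x_n,y_1,…,y_n}, and let G_3 = G ∖ {x_i, y_i : x_i ∈ N[x_n] ∪ N[y_n]} be the induced subgraph obtained by deleting all pairs x_i, y_i with x_i in the union of the closed neighborhoods of x_n and y_n. If D is a set of pairwise 3-disjoint edges of G_3, then D ∪ {x_n y_n} is a set of pairwise 3-disjoint edges of G. Consequently a(G) ≥ a(G_3) + 1. -/

import Mathlib

/-- `C` is a vertex cover of the graph `G`. -/
def IsVertexCover {V : Type*} (G : SimpleGraph V) (C : Finset V) : Prop :=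
  ∀ ⦃v w : V⦄, G.Adj v w → v ∈ C ∨ w ∈ C

/-- `C` is a minimal vertex cover of the graph `G`. -/
def IsMinVertexCover {V : Type*} (G : SimpleGraph V) (C : Finset V) : Prop :=
  IsVertexCover G C ∧ ∀ D ⊆ C, IsVertexCover G D → D = C

/-- `C` is an independent set of the graph `G`. -/
def IsIndepSet {V : Type*} (G : SimpleGraph V) (C : Finset V) : Prop :=
  ∀ ⦃v w : V⦄, v ∈ C → w ∈ C → ¬ G.Adj v w

/-- `C` is a maximal independent set of the graph `G`. -/
def IsMaxIndepSet {V : Type*} (G : SimpleGraph V) (C : Finset V) : Prop :=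
  IsIndepSet G C ∧ ∀ D, C ⊆ D → IsIndepSet G D → D = C

/-- A graph on the vertex set `{x_i, y_i : i ∈ ι}` (with `x_i = Sum.inl i` and
`y_i = Sum.inr i`) is in standard Cohen–Macaulay very well-covered form if it satisfies
conditions (i)–(v) of the Crupi–Rinaldo–Terai characterization. -/
def StdCMVWC {ι : Type*} [LinearOrder ι] [Fintype ι] (G : SimpleGraph (ι ⊕ ι)) : Prop :=
  IsMinVertexCover G (Finset.univ.image Sum.inl) ∧
  IsMaxIndepSet G (Finset.univ.image Sum.inr) ∧
  (∀ i : ι, G.Adj (Sum.inl i) (Sum.inr i)) ∧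
  (∀ i j : ι, G.Adj (Sum.inl i) (Sum.inr j) → i ≤ j) ∧
  (∀ i j : ι, G.Adj (Sum.inl i) (Sum.inr j) → ¬ G.Adj (Sum.inl i) (Sum.inl j)) ∧
  (∀ (i j k : ι) (z : ι ⊕ ι), (z = Sum.inl i ∨ z = Sum.inr i) →
    i ≠ j → j ≠ k → i ≠ k →
    G.Adj z (Sum.inl j) → G.Adj (Sum.inr j) (Sum.inl k) → G.Adj z (Sum.inl k))


/-- The subgraph of `G` obtained by deleting all vertices outside `S` (together with
their incident edges), viewed as a graph on the same vertex set. -/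
def restrictG {V : Type*} (G : SimpleGraph V) (S : Set V) : SimpleGraph V where
  Adj v w := G.Adj v w ∧ v ∈ S ∧ w ∈ S
  symm := ⟨fun v w h => ⟨h.1.symm, h.2.2, h.2.1⟩⟩
  loopless := ⟨fun v h => G.irrefl h.1⟩

/-- The vertex `x_n`. -/
def xnV (n : ℕ) : Fin (n + 1) ⊕ Fin (n + 1) := Sum.inl (Fin.last n)

/-- The vertex `y_n`. -/
def ynV (n : ℕ) : Fin (n + 1) ⊕ Fin (n + 1) := Sum.inr (Fin.last n)

/-- The indices `i` with `x_i ∈ N(x_n)`, i.e. `N(x_n) ∖ {y_n} = {x_{i_1},…,x_{i_t}}`. -/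
def nbrX (n : ℕ) (G : SimpleGraph (Fin (n + 1) ⊕ Fin (n + 1))) [DecidableRel G.Adj] :
    Finset (Fin (n + 1)) :=
  Finset.univ.filter fun i => G.Adj (Sum.inl i) (xnV n)

/-- The indices `i` with `x_i ∈ N(y_n)`, i.e. `N(y_n) ∖ {x_n} = {x_{j_1},…,x_{j_p}}`. -/
def nbrY (n : ℕ) (G : SimpleGraph (Fin (n + 1) ⊕ Fin (n + 1))) [DecidableRel G.Adj] :
    Finset (Fin (n + 1)) :=
  Finset.univ.filter fun i => G.Adj (Sum.inl i) (ynV n)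

/-- `G_1 = G ∖ {x_{i_1},y_{i_1},…,x_{i_t},y_{i_t},x_n,y_n}`. -/
def G₁ (n : ℕ) (G : SimpleGraph (Fin (n + 1) ⊕ Fin (n + 1))) [DecidableRel G.Adj] :
    SimpleGraph (Fin (n + 1) ⊕ Fin (n + 1)) :=
  restrictG G {v | Sum.elim id id v ∉ nbrX n G ∧ Sum.elim id id v ≠ Fin.last n}

/-- `G_2 = G ∖ {x_{j_1},y_{j_1},…,x_{j_p},y_{j_p},x_n,y_n}`. -/
def G₂ (n : ℕ) (G : SimpleGraph (Fin (n + 1) ⊕ Fin (n + 1))) [DecidableRel G.Adj] :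
    SimpleGraph (Fin (n + 1) ⊕ Fin (n + 1)) :=
  restrictG G {v | Sum.elim id id v ∉ nbrY n G ∧ Sum.elim id id v ≠ Fin.last n}

/-- `G_3 = G ∖ {x_i, y_i : x_i ∈ N[x_n] ∪ N[y_n]}`, the induced subgraph `G_1 ∩ G_2`. -/
def G₃ (n : ℕ) (G : SimpleGraph (Fin (n + 1) ⊕ Fin (n + 1))) [DecidableRel G.Adj] :
    SimpleGraph (Fin (n + 1) ⊕ Fin (n + 1)) :=
  restrictG G {v | Sum.elim id id v ∉ nbrX n G ∧ Sum.elim id id v ∉ nbrY n G ∧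
    Sum.elim id id v ≠ Fin.last n}

/-- Two edges `e, f` of `G` are 3-disjoint if the induced subgraph of `G` on their four
endpoints consists exactly of the two disjoint edges `e` and `f`. -/
def ThreeDisjoint {V : Type*} (G : SimpleGraph V) (e f : Sym2 V) : Prop :=
  ∀ a b c d : V, e = s(a, b) → f = s(c, d) →
    a ≠ c ∧ a ≠ d ∧ b ≠ c ∧ b ≠ d ∧
      ¬ G.Adj a c ∧ ¬ G.Adj a d ∧ ¬ G.Adj b c ∧ ¬ G.Adj b d

/-- `a(G)`: the maximum size of a set of pairwise 3-disjoint edges of `G`. -/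
noncomputable def aNum {V : Type*} [DecidableEq V] (G : SimpleGraph V) : ℕ :=
  sSup {k | ∃ D : Finset (Sym2 V), (∀ e ∈ D, e ∈ G.edgeSet) ∧
    (↑D : Set (Sym2 V)).Pairwise (ThreeDisjoint G) ∧ D.card = k}

/-- The three membership conditions describing the vertex set of `G₃`. -/
def inS3 (n : ℕ) (G : SimpleGraph (Fin (n + 1) ⊕ Fin (n + 1))) [DecidableRel G.Adj]
    (v : Fin (n + 1) ⊕ Fin (n + 1)) : Prop :=
  Sum.elim id id v ∉ nbrX n G ∧ Sum.elim id id v ∉ nbrY n G ∧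
    Sum.elim id id v ≠ Fin.last n

lemma G3_adj_iff (n : ℕ) (G : SimpleGraph (Fin (n + 1) ⊕ Fin (n + 1))) [DecidableRel G.Adj]
    (v w : Fin (n + 1) ⊕ Fin (n + 1)) :
    (G₃ n G).Adj v w ↔ G.Adj v w ∧ inS3 n G v ∧ inS3 n G w := Iff.rfl

lemma not_adj_ends {n : ℕ} {G : SimpleGraph (Fin (n + 1) ⊕ Fin (n + 1))} [DecidableRel G.Adj]
    (hG : StdCMVWC G) {c : Fin (n + 1) ⊕ Fin (n + 1)} (hc : inS3 n G c) :
    ¬ G.Adj c (xnV n) ∧ ¬ G.Adj c (ynV n) ∧ c ≠ xnV n ∧ c ≠ ynV n := by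
  obtain ⟨hX, hY, hl⟩ := hc
  obtain ⟨-, hind, -, hle, -, -⟩ := hG
  cases c with
  | inl i =>
    simp only [Sum.elim_inl, id] at hX hY hl
    refine ⟨fun h => hX ?_, fun h => hY ?_, ?_, by simp [ynV]⟩
    · simp only [nbrX, Finset.mem_filter, Finset.mem_univ, true_and]; exact h
    · simp only [nbrY, Finset.mem_filter, Finset.mem_univ, true_and]; exact h
    · simp only [xnV, ne_eq, Sum.inl.injEq]; exact hl
  | inr i =>
    simp only [Sum.elim_inr, id] at hX hY hl
    refine ⟨?_, ?_, by simp [xnV], ?_⟩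
    · intro h
      have := hle (Fin.last n) i h.symm
      exact hl (le_antisymm (Fin.le_last i) this)
    · intro h
      exact hind.1 (by simp) (by simp [ynV]) h
    · simp only [ynV, ne_eq, Sum.inr.injEq]; exact hl

/-- If `D` is a set of pairwise 3-disjoint edges of `G_3`, then `D ∪ {x_n y_n}` is a set
of pairwise 3-disjoint edges of `G`; consequently `a(G) ≥ a(G_3) + 1`. -/
theorem stmt9 (n : ℕ) (G : SimpleGraph (Fin (n + 1) ⊕ Fin (n + 1))) [DecidableRel G.Adj]
    (hG : StdCMVWC G) :
    (∀ D : Finset (Sym2 (Fin (n + 1) ⊕ Fin (n + 1))),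
      (∀ e ∈ D, e ∈ (G₃ n G).edgeSet) →
      (↑D : Set (Sym2 (Fin (n + 1) ⊕ Fin (n + 1)))).Pairwise (ThreeDisjoint (G₃ n G)) →
        (∀ e ∈ insert s(xnV n, ynV n) D, e ∈ G.edgeSet) ∧
        (↑(insert s(xnV n, ynV n) D) :
            Set (Sym2 (Fin (n + 1) ⊕ Fin (n + 1)))).Pairwise (ThreeDisjoint G)) ∧
    aNum (G₃ n G) + 1 ≤ aNum G := by
  have hxyadj : G.Adj (xnV n) (ynV n) := hG.2.2.1 (Fin.last n)
  have key : ∀ D : Finset (Sym2 (Fin (n + 1) ⊕ Fin (n + 1))),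
      (∀ e ∈ D, e ∈ (G₃ n G).edgeSet) →
      (↑D : Set (Sym2 (Fin (n + 1) ⊕ Fin (n + 1)))).Pairwise (ThreeDisjoint (G₃ n G)) →
        (∀ e ∈ insert s(xnV n, ynV n) D, e ∈ G.edgeSet) ∧
        (↑(insert s(xnV n, ynV n) D) :
            Set (Sym2 (Fin (n + 1) ⊕ Fin (n + 1)))).Pairwise (ThreeDisjoint G) := by
    intro D hD hP
    have hedge : ∀ e ∈ insert s(xnV n, ynV n) D, e ∈ G.edgeSet := by
      intro e he
      rcases Finset.mem_insert.mp he with rfl | he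
      · exact hxyadj
      · induction e using Sym2.inductionOn with
        | hf a b =>
          have h := hD _ he
          rw [SimpleGraph.mem_edgeSet, G3_adj_iff] at h
          exact h.1
    refine ⟨hedge, ?_⟩
    -- 3-disjointness of the new edge with any edge of D
    have hcross : ∀ e ∈ D, ThreeDisjoint G s(xnV n, ynV n) e ∧
        ThreeDisjoint G e s(xnV n, ynV n) := by
      intro e he
      have hmem : ∀ c d : Fin (n + 1) ⊕ Fin (n + 1), e = s(c, d) →
          inS3 n G c ∧ inS3 n G d := by
        intro c d hcd
        have h := hD _ he
        rw [hcd, SimpleGraph.mem_edgeSet, G3_adj_iff] at h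
        exact h.2
      have main : ∀ c d : Fin (n + 1) ⊕ Fin (n + 1), e = s(c, d) →
          xnV n ≠ c ∧ xnV n ≠ d ∧ ynV n ≠ c ∧ ynV n ≠ d ∧
          ¬ G.Adj (xnV n) c ∧ ¬ G.Adj (xnV n) d ∧ ¬ G.Adj (ynV n) c ∧ ¬ G.Adj (ynV n) d := by
        intro c d hcd
        obtain ⟨hc, hd⟩ := hmem c d hcd
        obtain ⟨hc1, hc2, hc3, hc4⟩ := not_adj_ends hG hc
        obtain ⟨hd1, hd2, hd3, hd4⟩ := not_adj_ends hG hd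
        exact ⟨Ne.symm hc3, Ne.symm hd3, Ne.symm hc4, Ne.symm hd4,
          fun h => hc1 h.symm, fun h => hd1 h.symm,
          fun h => hc2 h.symm, fun h => hd2 h.symm⟩
      constructor
      · intro a b c d h1 h2
        obtain ⟨q1, q2, q3, q4, q5, q6, q7, q8⟩ := main c d h2
        rcases Sym2.eq_iff.mp h1 with ⟨ha, hb⟩ | ⟨ha, hb⟩ <;> subst ha <;> subst hb
        · exact ⟨q1, q2, q3, q4, q5, q6, q7, q8⟩
        · exact ⟨q3, q4, q1, q2, q7, q8, q5, q6⟩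
      · intro a b c d h2 h1
        obtain ⟨q1, q2, q3, q4, q5, q6, q7, q8⟩ := main a b h2
        rcases Sym2.eq_iff.mp h1 with ⟨hc, hd⟩ | ⟨hc, hd⟩ <;> subst hc <;> subst hd
        · exact ⟨Ne.symm q1, Ne.symm q3, Ne.symm q2, Ne.symm q4,
            fun h => q5 h.symm, fun h => q7 h.symm, fun h => q6 h.symm, fun h => q8 h.symm⟩
        · exact ⟨Ne.symm q3, Ne.symm q1, Ne.symm q4, Ne.symm q2,
            fun h => q7 h.symm, fun h => q5 h.symm, fun h => q8 h.symm, fun h => q6 h.symm⟩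
    -- 3-disjointness within D transfers from G₃ to G
    have hDG : (↑D : Set (Sym2 (Fin (n + 1) ⊕ Fin (n + 1)))).Pairwise (ThreeDisjoint G) := by
      intro e he f hf hef a b c d h1 h2
      obtain ⟨q1, q2, q3, q4, q5, q6, q7, q8⟩ := hP he hf hef a b c d h1 h2
      have hab : inS3 n G a ∧ inS3 n G b := by
        have h := hD _ he
        rw [h1, SimpleGraph.mem_edgeSet, G3_adj_iff] at h
        exact h.2
      have hcd : inS3 n G c ∧ inS3 n G d := by
        have h := hD _ hf
        rw [h2, SimpleGraph.mem_edgeSet, G3_adj_iff] at h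
        exact h.2
      refine ⟨q1, q2, q3, q4, ?_, ?_, ?_, ?_⟩
      · exact fun h => q5 ((G3_adj_iff n G a c).mpr ⟨h, hab.1, hcd.1⟩)
      · exact fun h => q6 ((G3_adj_iff n G a d).mpr ⟨h, hab.1, hcd.2⟩)
      · exact fun h => q7 ((G3_adj_iff n G b c).mpr ⟨h, hab.2, hcd.1⟩)
      · exact fun h => q8 ((G3_adj_iff n G b d).mpr ⟨h, hab.2, hcd.2⟩)
    rw [Finset.coe_insert]
    rw [Set.pairwise_insert]
    exact ⟨hDG, fun e he _ => ⟨(hcross e he).1, (hcross e he).2⟩⟩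
  refine ⟨key, ?_⟩
  have bdd : ∀ (H : SimpleGraph (Fin (n + 1) ⊕ Fin (n + 1))),
      BddAbove {k | ∃ D : Finset (Sym2 (Fin (n + 1) ⊕ Fin (n + 1))),
        (∀ e ∈ D, e ∈ H.edgeSet) ∧
        (↑D : Set (Sym2 (Fin (n + 1) ⊕ Fin (n + 1)))).Pairwise (ThreeDisjoint H) ∧
        D.card = k} := by
    intro H
    refine ⟨Fintype.card (Sym2 (Fin (n + 1) ⊕ Fin (n + 1))), ?_⟩
    rintro k ⟨D, -, -, rfl⟩
    exact Finset.card_le_univ D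
  have hmem : aNum (G₃ n G) ∈ {k | ∃ D : Finset (Sym2 (Fin (n + 1) ⊕ Fin (n + 1))),
      (∀ e ∈ D, e ∈ (G₃ n G).edgeSet) ∧
      (↑D : Set (Sym2 (Fin (n + 1) ⊕ Fin (n + 1)))).Pairwise (ThreeDisjoint (G₃ n G)) ∧
      D.card = k} := by
    have hne : ({k | ∃ D : Finset (Sym2 (Fin (n + 1) ⊕ Fin (n + 1))),
        (∀ e ∈ D, e ∈ (G₃ n G).edgeSet) ∧
        (↑D : Set (Sym2 (Fin (n + 1) ⊕ Fin (n + 1)))).Pairwise (ThreeDisjoint (G₃ n G)) ∧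
        D.card = k} : Set ℕ).Nonempty := ⟨0, ∅, by simp, by simp, rfl⟩
    exact Nat.sSup_mem hne (bdd _)
  obtain ⟨D, hD1, hD2, hDc⟩ := hmem
  obtain ⟨hE, hP⟩ := key D hD1 hD2
  have hnotmem : s(xnV n, ynV n) ∉ D := by
    intro h
    have h' := hD1 _ h
    rw [SimpleGraph.mem_edgeSet, G3_adj_iff] at h'
    exact h'.2.1.2.2 rfl
  have hmem2 : aNum (G₃ n G) + 1 ∈ {k | ∃ D : Finset (Sym2 (Fin (n + 1) ⊕ Fin (n + 1))),
      (∀ e ∈ D, e ∈ G.edgeSet) ∧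
      (↑D : Set (Sym2 (Fin (n + 1) ⊕ Fin (n + 1)))).Pairwise (ThreeDisjoint G) ∧
      D.card = k} :=
    ⟨insert s(xnV n, ynV n) D, hE, hP, by
      rw [Finset.card_insert_of_notMem hnotmem, hDc]⟩
  exact le_csSup (bdd G) hmem2
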